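/- Let K' be the field of order q = p^s and let P be the product of the defining linear forms of all q² lines of P²(K') not passing through a fixed K'-point q₀. Then deg P = q², and through every K'-point other than q₀ there pass exactly q of these lines, so P lies in the q-th symbolic power I^{(q)} of the ideal I of all K'-points other than q₀. -/

import Mathlib

open MvPolynomial

lemma prod_mem_pow {R : Type} [CommRing R] (I : Ideal R) {α : Type} (T : Finset α) (f : α → R)
    (h : ∀ a ∈ T, f a ∈ I) : ∏ a ∈ T, f a ∈ I ^ T.card := by
  classical
  induction T using Finset.cons_induction with
  | empty => simp [Ideal.one_eq_top]
  | cons a T ha ih =>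
    rw [Finset.prod_cons, Finset.card_cons, pow_succ']
    exact Ideal.mul_mem_mul (h a (Finset.mem_cons_self a T))
      (ih fun b hb => h b (Finset.mem_cons_of_mem hb))

lemma card_linear_sol {F : Type} [Field F] (c1 c2 d : F) (h : c1 ≠ 0 ∨ c2 ≠ 0) :
    Nat.card {ab : F × F // c1 * ab.1 + c2 * ab.2 = d} = Nat.card F := by
  rcases h with h | h
  · refine Nat.card_congr ⟨fun x => x.1.2, fun b => ⟨((d - c2 * b) / c1, b), by field_simp; ring⟩,
      fun x => ?_, fun b => rfl⟩
    obtain ⟨⟨a, b⟩, hx⟩ := x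
    simp only at hx ⊢
    congr 1
    have : a = (d - c2 * b) / c1 := by field_simp; linear_combination hx
    simp [this]
  · refine Nat.card_congr ⟨fun x => x.1.1, fun a => ⟨(a, (d - c1 * a) / c2), by field_simp; ring⟩,
      fun x => ?_, fun a => rfl⟩
    obtain ⟨⟨a, b⟩, hx⟩ := x
    simp only at hx ⊢
    congr 1
    have : b = (d - c1 * a) / c2 := by field_simp; linear_combination hx
    simp [this]

/-- The homogeneous ideal of a point of projective space (given by a
representative `π`). -/
noncomputable def pointIdeal {K : Type} [Field K] {n : ℕ} (π : Fin n → K) :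
    Ideal (MvPolynomial (Fin n) K) :=
  Ideal.span {f | (∃ d, f.IsHomogeneous d) ∧ eval π f = 0}

theorem stmt9 (p s : ℕ) (hp : p.Prime) (hs : 1 ≤ s)
    (K : Type) [Field K] [CharP K p] (K' : Subfield K) [Fintype K']
    (hcard : Fintype.card K' = p ^ s) :
    -- the excluded point q₀ = [0:1:0]
    let q0 : Fin 3 → K := fun i => if i = 1 then 1 else 0
    let S : Set (Fin 3 → K) :=
      {π | π ≠ 0 ∧ (∀ i, π i ∈ K') ∧ ¬∃ c : K, π = c • q0}
    -- the lines of P²(K') not through q₀ are a·x₀ + x₁ + b·x₂, (a,b) ∈ K'²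
    let line : K' × K' → MvPolynomial (Fin 3) K :=
      fun ab => C (ab.1 : K) * X 0 + X 1 + C (ab.2 : K) * X 2
    let P : MvPolynomial (Fin 3) K := ∏ ab : K' × K', line ab
    P.totalDegree = (p ^ s) ^ 2 ∧
    (∀ π ∈ S, Nat.card {ab : K' × K' // eval π (line ab) = 0} = p ^ s) ∧
    P ∈ ⨅ π ∈ S, (pointIdeal π) ^ (p ^ s) := by
  classical
  intro q0 S line P
  have hcard2 : Fintype.card (K' × K') = (p ^ s) ^ 2 := by
    rw [Fintype.card_prod, hcard]; ring
  have hlinehom : ∀ ab : K' × K', (line ab).IsHomogeneous 1 := by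
    intro ab
    exact ((isHomogeneous_C_mul_X _ 0).add (isHomogeneous_X _ 1)).add
      (isHomogeneous_C_mul_X _ 2)
  have hPhom : P.IsHomogeneous ((p ^ s) ^ 2) := by
    have := IsHomogeneous.prod Finset.univ line (fun _ => 1)
      (fun ab _ => hlinehom ab)
    simpa [hcard2] using this
  have hPne : P ≠ 0 := by
    intro h0
    have : eval q0 P = 1 := by
      simp only [P, line, map_prod, map_add, map_mul, eval_C, eval_X, q0]
      simp
    rw [h0] at this
    simp at this
  -- counting
  have hcount : ∀ π ∈ S, Nat.card {ab : K' × K' // eval π (line ab) = 0} = p ^ s := by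
    rintro π ⟨hπ0, hπK, hπq0⟩
    set a0 : K' := ⟨π 0, hπK 0⟩ with ha0
    set b0 : K' := ⟨π 1, hπK 1⟩ with hb0
    set c0 : K' := ⟨π 2, hπK 2⟩ with hc0
    have hnz : a0 ≠ 0 ∨ c0 ≠ 0 := by
      by_contra h
      push_neg at h
      obtain ⟨h1, h2⟩ := h
      apply hπq0
      refine ⟨π 1, funext fun i => ?_⟩
      have e0 : π 0 = 0 := congrArg Subtype.val h1
      have e2 : π 2 = 0 := congrArg Subtype.val h2
      fin_cases i <;> simp [q0, e0, e2]
    have hiff : ∀ ab : K' × K', eval π (line ab) = 0 ↔ a0 * ab.1 + c0 * ab.2 = -b0 := by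
      intro ab
      have : eval π (line ab) = ((a0 * ab.1 + c0 * ab.2 - (-b0) : K') : K) := by
        simp [line]
        push_cast
        ring
      rw [this]
      rw [show ((0 : K) = ((0 : K') : K)) from rfl]
      rw [Subtype.coe_inj]
      exact sub_eq_zero
    rw [Nat.card_congr (Equiv.subtypeEquivRight hiff), card_linear_sol a0 c0 (-b0) hnz,
      Nat.card_eq_fintype_card, hcard]
  refine ⟨hPhom.totalDegree hPne, hcount, ?_⟩
  rw [Submodule.mem_iInf]
  intro π
  rw [Submodule.mem_iInf]
  intro hπ
  set T : Finset (K' × K') := Finset.univ.filter (fun ab => eval π (line ab) = 0) with hT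
  have hTcard : T.card = p ^ s := by
    rw [← hcount π hπ, Nat.card_eq_fintype_card, Fintype.card_subtype]
  have hmem : ∀ ab ∈ T, line ab ∈ pointIdeal π := by
    intro ab hab
    rw [hT, Finset.mem_filter] at hab
    exact Ideal.subset_span ⟨⟨1, hlinehom ab⟩, hab.2⟩
  have h1 : ∏ ab ∈ T, line ab ∈ (pointIdeal π) ^ (p ^ s) := by
    rw [← hTcard]
    exact prod_mem_pow _ T line hmem
  have h2 : P = (∏ ab ∈ T, line ab) * ∏ ab ∈ Finset.univ.filter (fun ab => ¬ eval π (line ab) = 0), line ab :=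
    (Finset.prod_filter_mul_prod_filter_not Finset.univ _ line).symm
  rw [h2]
  exact Ideal.mul_mem_right _ _ h1
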